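/- Let S ≥ 1/2 with 2S ∈ ℕ and 1 ≤ n ≤ ℓ. For every permutation-symmetric Ψ: {1,…,ℓ}^n → ℂ, E_{ℓ,n}(Ψ) ≥ (S/2) ∑_{A,B ∈ {1,…,ℓ−n+1}^n, |A−B|₁ = 1} |Φ(A) − Φ(B)|², where Φ: {1,…,ℓ−n+1}^n → ℂ is the permutation-symmetric function determined by Φ(V(X)) = Ψ(X) for all X ∈ 𝒳_{ℓ,n}. (The right-hand side is S times the quadratic form of the graph Laplacian with free boundary conditions on the box {1,…,ℓ−n+1}^n applied to Φ.) -/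
import Mathlib


open scoped BigOperators

noncomputable section

/-- The spin value `S = twoS / 2`. -/
def Sval (twoS : ℕ) : ℝ := twoS / 2

/-- The occupation number `n_x(X) = #{j : x_j = x}` of the site `x` in the
configuration `X` (sites are labelled `0, …, ℓ−1`). -/
def occ {n ℓ : ℕ} (X : Fin n → Fin ℓ) (x : ℕ) : ℕ :=
  (Finset.univ.filter fun j => (X j : ℕ) = x).card

/-- Permutation symmetry of an `n`-particle wave function. -/
def SymmFun {n ℓ : ℕ} (Ψ : (Fin n → Fin ℓ) → ℂ) : Prop :=
  ∀ (π : Equiv.Perm (Fin n)) (X : Fin n → Fin ℓ), Ψ (X ∘ π) = Ψ X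

/-- The square root factor `√([1 − #{k ≠ j : x_k = x}/(2S)]₊)` (note that `Real.sqrt`
of a negative number is `0`, which implements the positive part). -/
def hopCoeff (twoS : ℕ) {n ℓ : ℕ} (X : Fin n → Fin ℓ) (j : Fin n) (x : ℕ) : ℝ :=
  Real.sqrt (1 - ((Finset.univ.filter fun k => k ≠ j ∧ (X k : ℕ) = x).card : ℝ) / (twoS : ℝ))

/-- The Heisenberg energy form `E_{ℓ,n}(Ψ)` in the Holstein–Primakoff representation. -/
def Eform (twoS : ℕ) {n ℓ : ℕ} (Ψ : (Fin n → Fin ℓ) → ℂ) : ℝ :=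
  Sval twoS * ∑ j : Fin n, ∑ X : Fin n → Fin ℓ,
    if h : (X j : ℕ) + 1 < ℓ then
      ‖Ψ (Function.update X j ⟨(X j : ℕ) + 1, h⟩) * (hopCoeff twoS X j (X j : ℕ) : ℂ)
        - Ψ X * (hopCoeff twoS X j ((X j : ℕ) + 1) : ℂ)‖ ^ 2
    else 0

/-- The two-particle density `ρ(x,y) = ⟨Ψ, a†_x a†_y a_y a_x Ψ⟩`; for a permutation
symmetric normalized `Ψ` this equals `n(n−1) ∑_{x₃,…,x_n} |Ψ(x,y,x₃,…,x_n)|²`. -/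
def rho2 {n ℓ : ℕ} (Ψ : (Fin n → Fin ℓ) → ℂ) (x y : ℕ) : ℝ :=
  ∑ X : Fin n → Fin ℓ, ‖Ψ X‖ ^ 2 *
    ((Finset.univ.filter fun p : Fin n × Fin n =>
        p.1 ≠ p.2 ∧ (X p.1 : ℕ) = x ∧ (X p.2 : ℕ) = y).card : ℝ)

namespace EFL


variable {n m : ℕ}

/-- tie-break value: coordinate `i` gets the largest value `n`. -/
def tb (i k : Fin n) : ℕ := if k = i then n else (k : ℕ)

lemma tb_le (i k : Fin n) : tb i k ≤ n := by
  unfold tb; split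
  · exact le_rfl
  · exact le_of_lt k.isLt

lemma tb_inj (i : Fin n) {j k : Fin n} (h : tb i j = tb i k) : j = k := by
  unfold tb at h
  by_cases hj : j = i <;> by_cases hk : k = i
  · rw [hj, hk]
  · rw [if_pos hj, if_neg hk] at h; exact absurd h.symm (ne_of_lt k.isLt)
  · rw [if_neg hj, if_pos hk] at h; exact absurd h (ne_of_lt j.isLt)
  · rw [if_neg hj, if_neg hk] at h; exact Fin.ext h

/-- lexicographic key on `(A k, tb i k)`. -/
def akey (A : Fin n → Fin m) (i k : Fin n) : ℕ := (A k : ℕ) * (n + 1) + tb i k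

lemma akey_lt_of {A : Fin n → Fin m} {i j k : Fin n}
    (h : (A j : ℕ) < A k ∨ ((A j : ℕ) = A k ∧ tb i j < tb i k)) :
    akey A i j < akey A i k := by
  unfold akey
  have h1 := tb_le i j
  have h2 := tb_le i k
  rcases h with h | ⟨h, h'⟩
  · calc (A j : ℕ) * (n + 1) + tb i j < (A j : ℕ) * (n + 1) + (n + 1) := by omega
    _ = ((A j : ℕ) + 1) * (n + 1) := by ring
    _ ≤ (A k : ℕ) * (n + 1) := Nat.mul_le_mul_right _ h
    _ ≤ (A k : ℕ) * (n + 1) + tb i k := Nat.le_add_right _ _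
  · rw [h]; omega

lemma akey_ne {A : Fin n → Fin m} {i j k : Fin n} (hjk : j ≠ k) :
    akey A i j ≠ akey A i k := by
  rcases Nat.lt_trichotomy (A j : ℕ) (A k : ℕ) with h | h | h
  · exact ne_of_lt (akey_lt_of (Or.inl h))
  · rcases Nat.lt_trichotomy (tb i j) (tb i k) with h2 | h2 | h2
    · exact ne_of_lt (akey_lt_of (Or.inr ⟨h, h2⟩))
    · exact absurd (tb_inj i h2) hjk
    · exact (ne_of_lt (akey_lt_of (Or.inr ⟨h.symm, h2⟩))).symm
  · exact (ne_of_lt (akey_lt_of (Or.inl h))).symm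

lemma of_akey_lt {A : Fin n → Fin m} {i j k : Fin n} (h : akey A i j < akey A i k) :
    (A j : ℕ) < A k ∨ ((A j : ℕ) = A k ∧ tb i j < tb i k) := by
  rcases Nat.lt_trichotomy (A j : ℕ) (A k : ℕ) with h1 | h1 | h1
  · exact Or.inl h1
  · rcases Nat.lt_trichotomy (tb i j) (tb i k) with h2 | h2 | h2
    · exact Or.inr ⟨h1, h2⟩
    · exfalso; unfold akey at h; rw [h1, h2] at h; exact lt_irrefl _ h
    · exact absurd (akey_lt_of (Or.inr ⟨h1.symm, h2⟩)) (not_lt.mpr h.le)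
  · exact absurd (akey_lt_of (Or.inl h1)) (not_lt.mpr h.le)

/-- rank of `k` in the lexicographic order. -/
def arank (A : Fin n → Fin m) (i k : Fin n) : ℕ :=
  (Finset.univ.filter fun j => akey A i j < akey A i k).card

lemma arank_lt {A : Fin n → Fin m} {i j k : Fin n} (h : akey A i j < akey A i k) :
    arank A i j < arank A i k := by
  apply Finset.card_lt_card
  constructor
  · intro x hx
    simp only [Finset.mem_filter, Finset.mem_univ, true_and] at hx ⊢
    exact lt_trans hx h
  · intro hsub
    have hj : j ∈ Finset.univ.filter fun x => akey A i x < akey A i k := by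
      simp only [Finset.mem_filter, Finset.mem_univ, true_and]; exact h
    have := hsub hj
    simp only [Finset.mem_filter, Finset.mem_univ, true_and] at this
    exact lt_irrefl _ this

lemma arank_lt_n {A : Fin n → Fin m} {i : Fin n} (k : Fin n) : arank A i k < n := by
  have h1 : (Finset.univ.filter fun j => akey A i j < akey A i k) ⊆ Finset.univ.erase k := by
    intro x hx
    simp only [Finset.mem_filter, Finset.mem_univ, true_and] at hx
    refine Finset.mem_erase.mpr ⟨?_, Finset.mem_univ x⟩
    intro e; rw [e] at hx; exact lt_irrefl _ hx
  have h2 := Finset.card_le_card h1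
  rw [Finset.card_erase_of_mem (Finset.mem_univ k), Finset.card_univ, Fintype.card_fin] at h2
  have : 0 < n := k.pos
  unfold arank; omega

/-- the actual position of particle `k`. -/
def pos (A : Fin n → Fin m) (i k : Fin n) : ℕ := (A k : ℕ) + arank A i k

lemma pos_lt_of {A : Fin n → Fin m} {i j k : Fin n} (h : akey A i j < akey A i k) :
    pos A i j < pos A i k := by
  have h1 := arank_lt h
  have h2 : (A j : ℕ) ≤ A k := by
    rcases of_akey_lt h with h3 | ⟨h3, _⟩
    · exact h3.le
    · exact h3.le
  unfold pos; omega

lemma pos_lt_iff {A : Fin n → Fin m} {i j k : Fin n} :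
    pos A i j < pos A i k ↔ akey A i j < akey A i k := by
  constructor
  · intro h
    rcases Nat.lt_trichotomy (akey A i j) (akey A i k) with h1 | h1 | h1
    · exact h1
    · exfalso
      rcases eq_or_ne j k with e | e
      · rw [e] at h; exact lt_irrefl _ h
      · exact akey_ne e h1
    · exact absurd (pos_lt_of h1) (not_lt.mpr h.le)
  · exact pos_lt_of

lemma pos_inj {A : Fin n → Fin m} {i j k : Fin n} (h : pos A i j = pos A i k) : j = k := by
  by_contra hjk
  rcases Nat.lt_trichotomy (akey A i j) (akey A i k) with h1 | h1 | h1
  · exact absurd h (ne_of_lt (pos_lt_of h1))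
  · exact akey_ne hjk h1
  · exact absurd h.symm (ne_of_lt (pos_lt_of h1))

lemma pos_le (A : Fin n → Fin m) (i k : Fin n) : pos A i k ≤ (A k : ℕ) + n - 1 := by
  have := arank_lt_n (A := A) (i := i) k
  unfold pos; omega

lemma card_pos_filter (A : Fin n → Fin m) (i k : Fin n) :
    (Finset.univ.filter fun j => pos A i j < pos A i k).card = arank A i k := by
  unfold arank
  congr 1
  apply Finset.filter_congr
  intro j _
  simp only [pos_lt_iff]

/-- position `pos i + 1` is free. -/
lemma pos_ne_succ (A : Fin n → Fin m) (i j : Fin n) : pos A i j ≠ pos A i i + 1 := by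
  intro h
  have hji : j ≠ i := by
    intro e; rw [e] at h; omega
  have h1 : pos A i i < pos A i j := by omega
  have h2 : akey A i i < akey A i j := pos_lt_iff.mp h1
  rcases of_akey_lt h2 with h3 | ⟨_, h3⟩
  · have h4 := arank_lt h2
    have h5 : pos A i j = (A j : ℕ) + arank A i j := rfl
    have h6 : pos A i i = (A i : ℕ) + arank A i i := rfl
    omega
  · have h4 : tb i i = n := if_pos rfl
    have h5 := tb_le i j
    omega


variable {ℓ : ℕ}


lemma pos_lt_l (hn : 1 ≤ n) (hnℓ : n ≤ ℓ) (A : Fin n → Fin (ℓ - n + 1)) (i k : Fin n) :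
    pos A i k < ℓ := by
  have h1 := pos_le A i k
  have h2 := (A k).isLt
  omega

/-- the injective configuration associated to a box point `A`, with particle `i`
sitting on top of its block. -/
def conf (hn : 1 ≤ n) (hnℓ : n ≤ ℓ) (A : Fin n → Fin (ℓ - n + 1)) (i : Fin n) :
    Fin n → Fin ℓ :=
  fun k => ⟨pos A i k, pos_lt_l hn hnℓ A i k⟩

lemma conf_inj (hn : 1 ≤ n) (hnℓ : n ≤ ℓ) (A : Fin n → Fin (ℓ - n + 1)) (i : Fin n) :
    Function.Injective (conf hn hnℓ A i) := by
  intro j k h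
  exact pos_inj (congrArg Fin.val h)

lemma conf_V (hn : 1 ≤ n) (hnℓ : n ≤ ℓ) (A : Fin n → Fin (ℓ - n + 1)) (i : Fin n) :
    ∀ k, (A k : ℕ) = (conf hn hnℓ A i k : ℕ) -
      (Finset.univ.filter fun j => conf hn hnℓ A i j < conf hn hnℓ A i k).card := by
  intro k
  have h1 : (Finset.univ.filter fun j => conf hn hnℓ A i j < conf hn hnℓ A i k) =
      (Finset.univ.filter fun j => pos A i j < pos A i k) := by
    apply Finset.filter_congr
    intro j _
    simp only [conf, Fin.mk_lt_mk]
  rw [h1, card_pos_filter]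
  simp only [conf]
  unfold pos
  omega

lemma succ_lt (hn : 1 ≤ n) (hnℓ : n ≤ ℓ) (A : Fin n → Fin (ℓ - n + 1)) (i : Fin n)
    (hA : (A i : ℕ) + 1 < ℓ - n + 1) : pos A i i + 1 < ℓ := by
  have h1 := pos_le A i i
  omega

/-- the configuration with particle `i` moved up by one. -/
def conf' (hn : 1 ≤ n) (hnℓ : n ≤ ℓ) (A : Fin n → Fin (ℓ - n + 1)) (i : Fin n)
    (hA : (A i : ℕ) + 1 < ℓ - n + 1) : Fin n → Fin ℓ :=
  Function.update (conf hn hnℓ A i) i ⟨pos A i i + 1, succ_lt hn hnℓ A i hA⟩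

lemma conf'_apply_ne (hn : 1 ≤ n) (hnℓ : n ≤ ℓ) (A : Fin n → Fin (ℓ - n + 1)) (i : Fin n)
    (hA : (A i : ℕ) + 1 < ℓ - n + 1) {k : Fin n} (hk : k ≠ i) :
    (conf' hn hnℓ A i hA k : ℕ) = pos A i k := by
  simp only [conf', Function.update_of_ne hk, conf]

lemma conf'_apply_self (hn : 1 ≤ n) (hnℓ : n ≤ ℓ) (A : Fin n → Fin (ℓ - n + 1)) (i : Fin n)
    (hA : (A i : ℕ) + 1 < ℓ - n + 1) :
    (conf' hn hnℓ A i hA i : ℕ) = pos A i i + 1 := by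
  simp only [conf', Function.update_self]

lemma conf'_inj (hn : 1 ≤ n) (hnℓ : n ≤ ℓ) (A : Fin n → Fin (ℓ - n + 1)) (i : Fin n)
    (hA : (A i : ℕ) + 1 < ℓ - n + 1) :
    Function.Injective (conf' hn hnℓ A i hA) := by
  intro j k h
  have h' : (conf' hn hnℓ A i hA j : ℕ) = (conf' hn hnℓ A i hA k : ℕ) := congrArg Fin.val h
  by_cases hj : j = i <;> by_cases hk : k = i
  · rw [hj, hk]
  · rw [hj, conf'_apply_self, conf'_apply_ne hn hnℓ A i hA hk] at h'
    exact absurd h'.symm (pos_ne_succ A i k)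
  · rw [hk, conf'_apply_self, conf'_apply_ne hn hnℓ A i hA hj] at h'
    exact absurd h' (pos_ne_succ A i j)
  · rw [conf'_apply_ne hn hnℓ A i hA hj, conf'_apply_ne hn hnℓ A i hA hk] at h'
    exact pos_inj h'

lemma conf'_V (hn : 1 ≤ n) (hnℓ : n ≤ ℓ) (A : Fin n → Fin (ℓ - n + 1)) (i : Fin n)
    (hA : (A i : ℕ) + 1 < ℓ - n + 1) :
    ∀ k, ((Function.update A i ⟨(A i : ℕ) + 1, hA⟩ : Fin n → Fin (ℓ - n + 1)) k : ℕ) =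
      (conf' hn hnℓ A i hA k : ℕ) -
      (Finset.univ.filter fun j => conf' hn hnℓ A i hA j < conf' hn hnℓ A i hA k).card := by
  intro k
  by_cases hk : k = i
  · subst hk
    have h1 : (Finset.univ.filter fun j => conf' hn hnℓ A k hA j < conf' hn hnℓ A k hA k) =
        (Finset.univ.filter fun j => pos A k j < pos A k k) := by
      apply Finset.filter_congr
      intro j _
      simp only [Fin.lt_def]
      by_cases hj : j = k
      · subst hj; simp
      · rw [conf'_apply_ne hn hnℓ A k hA hj, conf'_apply_self]
        constructor
        · intro h
          have h2 : pos A k j ≠ pos A k k := fun e => hj (pos_inj e)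
          omega
        · omega
    rw [h1, card_pos_filter, Function.update_self, conf'_apply_self]
    simp only [Fin.val_mk]
    unfold pos
    omega
  · have h1 : (Finset.univ.filter fun j => conf' hn hnℓ A i hA j < conf' hn hnℓ A i hA k) =
        (Finset.univ.filter fun j => pos A i j < pos A i k) := by
      apply Finset.filter_congr
      intro j _
      simp only [Fin.lt_def]
      rw [conf'_apply_ne hn hnℓ A i hA hk]
      by_cases hj : j = i
      · subst hj
        rw [conf'_apply_self]
        have h2 := pos_ne_succ A j k
        constructor <;> omega
      · rw [conf'_apply_ne hn hnℓ A i hA hj]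
    rw [h1, card_pos_filter, Function.update_of_ne hk, conf'_apply_ne hn hnℓ A i hA hk]
    unfold pos
    omega

lemma hop_one_self (twoS : ℕ) (hn : 1 ≤ n) (hnℓ : n ≤ ℓ) (A : Fin n → Fin (ℓ - n + 1))
    (i : Fin n) : hopCoeff twoS (conf hn hnℓ A i) i ((conf hn hnℓ A i i : ℕ)) = 1 := by
  unfold hopCoeff
  have h1 : (Finset.univ.filter fun k =>
      k ≠ i ∧ ((conf hn hnℓ A i k : ℕ)) = (conf hn hnℓ A i i : ℕ)) = ∅ := by
    apply Finset.filter_false_of_mem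
    intro k _
    rintro ⟨hk, he⟩
    exact hk (pos_inj he)
  rw [h1]
  simp [Real.sqrt_one]

lemma hop_one_succ (twoS : ℕ) (hn : 1 ≤ n) (hnℓ : n ≤ ℓ) (A : Fin n → Fin (ℓ - n + 1))
    (i : Fin n) : hopCoeff twoS (conf hn hnℓ A i) i ((conf hn hnℓ A i i : ℕ) + 1) = 1 := by
  unfold hopCoeff
  have h1 : (Finset.univ.filter fun k =>
      k ≠ i ∧ ((conf hn hnℓ A i k : ℕ)) = (conf hn hnℓ A i i : ℕ) + 1) = ∅ := by
    apply Finset.filter_false_of_mem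
    intro k _
    rintro ⟨hk, he⟩
    exact pos_ne_succ A i k he
  rw [h1]
  simp [Real.sqrt_one]


end EFL

/-- The Heisenberg energy form dominates `S` times the quadratic form of
the free graph Laplacian on the box `{1,…,ℓ−n+1}^n` applied to the squeezed function `Φ`,
where `Φ(V(X)) = Ψ(X)` and `V` maps `x_i` to `x_i − #{j : x_j < x_i}`. -/
theorem energy_form_laplacian_lower_bound (twoS : ℕ) (hS : 1 ≤ twoS)
    {n ℓ : ℕ} (hn : 1 ≤ n) (hnℓ : n ≤ ℓ)
    (Ψ : (Fin n → Fin ℓ) → ℂ) (hΨ : SymmFun Ψ)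
    (Φ : (Fin n → Fin (ℓ - n + 1)) → ℂ)
    (hΦ : ∀ X : Fin n → Fin ℓ, Function.Injective X →
      ∀ A : Fin n → Fin (ℓ - n + 1),
        (∀ i, (A i : ℕ) = (X i : ℕ) - (Finset.univ.filter fun j => X j < X i).card) →
        Φ A = Ψ X) :
    Sval twoS / 2 * ∑ A : Fin n → Fin (ℓ - n + 1), ∑ B : Fin n → Fin (ℓ - n + 1),
        (if (∑ i : Fin n, (((A i : ℕ) : ℤ) - ((B i : ℕ) : ℤ)).natAbs) = 1
          then ‖Φ A - Φ B‖ ^ 2 else 0) ≤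
      Eform twoS Ψ := by
  classical
  -- the "up-edge" index set and summand
  set s : Finset (Fin n × (Fin n → Fin (ℓ - n + 1))) :=
    Finset.univ.filter (fun q => (q.2 q.1 : ℕ) + 1 < ℓ - n + 1) with hs
  set w : Fin n × (Fin n → Fin (ℓ - n + 1)) → ℝ := fun q =>
    if h : (q.2 q.1 : ℕ) + 1 < ℓ - n + 1 then
      ‖Φ q.2 - Φ (Function.update q.2 q.1 ⟨(q.2 q.1 : ℕ) + 1, h⟩)‖ ^ 2
    else 0 with hw
  -- decomposition of the distance-one condition
  have hdec : ∀ A B : Fin n → Fin (ℓ - n + 1),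
      (∑ i : Fin n, (((A i : ℕ) : ℤ) - ((B i : ℕ) : ℤ)).natAbs) = 1 →
      ∃ i : Fin n, (((A i : ℕ) : ℤ) - ((B i : ℕ) : ℤ)).natAbs = 1 ∧
        ∀ j, j ≠ i → A j = B j := by
    intro A B h
    set f : Fin n → ℕ := fun k => (((A k : ℕ) : ℤ) - ((B k : ℕ) : ℤ)).natAbs with hf
    obtain ⟨i, _, hi⟩ := Finset.exists_ne_zero_of_sum_ne_zero
      (f := f) (by rw [h]; exact one_ne_zero)
    have h1 : f i ≤ ∑ k : Fin n, f k :=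
      Finset.single_le_sum (fun j _ => Nat.zero_le _) (Finset.mem_univ i)
    have h3 : f i + ∑ k ∈ Finset.univ.erase i, f k = ∑ k : Fin n, f k :=
      Finset.add_sum_erase _ f (Finset.mem_univ i)
    have hsumf : ∑ k : Fin n, f k = 1 := h
    have h2 : ∀ j ∈ Finset.univ.erase i, f j = 0 :=
      Finset.sum_eq_zero_iff.mp (by omega)
    refine ⟨i, ?_, ?_⟩
    · show f i = 1
      omega
    · intro j hj
      have h4 : f j = 0 := h2 j (Finset.mem_erase.mpr ⟨hj, Finset.mem_univ j⟩)
      have h5 : (((A j : ℕ) : ℤ) - ((B j : ℕ) : ℤ)).natAbs = 0 := h4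
      exact Fin.ext (by omega)
  -- abbreviations for the pair decomposition
  have hsplit : (∑ A : Fin n → Fin (ℓ - n + 1), ∑ B : Fin n → Fin (ℓ - n + 1),
      (if (∑ i : Fin n, (((A i : ℕ) : ℤ) - ((B i : ℕ) : ℤ)).natAbs) = 1
        then ‖Φ A - Φ B‖ ^ 2 else 0)) =
      ∑ p : (Fin n → Fin (ℓ - n + 1)) × (Fin n → Fin (ℓ - n + 1)),
      (if (∑ i : Fin n, (((p.1 i : ℕ) : ℤ) - ((p.2 i : ℕ) : ℤ)).natAbs) = 1
        then ‖Φ p.1 - Φ p.2‖ ^ 2 else 0) :=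
    (Fintype.sum_prod_type (f := fun p :
        ((Fin n → Fin (ℓ - n + 1)) × (Fin n → Fin (ℓ - n + 1))) =>
      (if (∑ i : Fin n, (((p.1 i : ℕ) : ℤ) - ((p.2 i : ℕ) : ℤ)).natAbs) = 1
        then ‖Φ p.1 - Φ p.2‖ ^ 2 else 0))).symm
  have hfilter : (∑ p : (Fin n → Fin (ℓ - n + 1)) × (Fin n → Fin (ℓ - n + 1)),
      (if (∑ i : Fin n, (((p.1 i : ℕ) : ℤ) - ((p.2 i : ℕ) : ℤ)).natAbs) = 1
        then ‖Φ p.1 - Φ p.2‖ ^ 2 else 0)) =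
      ∑ p ∈ Finset.univ.filter
        (fun p : (Fin n → Fin (ℓ - n + 1)) × (Fin n → Fin (ℓ - n + 1)) =>
          (∑ i : Fin n, (((p.1 i : ℕ) : ℤ) - ((p.2 i : ℕ) : ℤ)).natAbs) = 1),
        ‖Φ p.1 - Φ p.2‖ ^ 2 :=
    (Finset.sum_filter _ _).symm
  -- the sum over up-oriented pairs equals the sum over up-edges
  have hup : ∑ p ∈ (Finset.univ.filter
        (fun p : (Fin n → Fin (ℓ - n + 1)) × (Fin n → Fin (ℓ - n + 1)) =>
          (∑ i : Fin n, (((p.1 i : ℕ) : ℤ) - ((p.2 i : ℕ) : ℤ)).natAbs) = 1)).filter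
        (fun p => (∑ i : Fin n, ((p.2 i : ℤ) - (p.1 i : ℤ))) = 1),
      ‖Φ p.1 - Φ p.2‖ ^ 2 = ∑ q ∈ s, w q := by
    refine (Finset.sum_bij
      (fun (q : Fin n × (Fin n → Fin (ℓ - n + 1))) (hq : q ∈ s) =>
        ((q.2, Function.update q.2 q.1
          ⟨(q.2 q.1 : ℕ) + 1, by simpa [hs] using hq⟩) :
          (Fin n → Fin (ℓ - n + 1)) × (Fin n → Fin (ℓ - n + 1))))
      ?_ ?_ ?_ ?_).symm
    · -- maps into the filter
      rintro ⟨i, A⟩ hq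
      have hA : (A i : ℕ) + 1 < ℓ - n + 1 := by simpa [hs] using hq
      simp only [Finset.mem_filter, Finset.mem_univ, true_and]
      constructor
      · rw [Finset.sum_eq_single_of_mem i (Finset.mem_univ i)]
        · simp [Function.update_self]
        · intro j _ hj
          simp [Function.update_of_ne hj]
      · rw [Finset.sum_eq_single_of_mem i (Finset.mem_univ i)]
        · simp [Function.update_self]
        · intro j _ hj
          simp [Function.update_of_ne hj]
    · -- injective
      rintro ⟨i, A⟩ hq ⟨i', A'⟩ hq' he
      have h1 : A = A' := congrArg Prod.fst he
      subst h1
      have h2 := congrArg Prod.snd he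
      simp only at h2
      by_cases hii : i = i'
      · subst hii; rfl
      · exfalso
        have h3 := congrArg (fun f : Fin n → Fin (ℓ - n + 1) => ((f i : Fin (ℓ - n + 1)) : ℕ)) h2
        simp only [Function.update_self, Function.update_of_ne hii] at h3
        omega
    · -- surjective
      rintro ⟨A, B⟩ hp
      simp only [Finset.mem_filter, Finset.mem_univ, true_and] at hp
      obtain ⟨hd, hσ⟩ := hp
      obtain ⟨i, hi1, hi2⟩ := hdec A B hd
      have hsum : (∑ k : Fin n, ((B k : ℤ) - (A k : ℤ))) = (B i : ℤ) - (A i : ℤ) := by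
        apply Finset.sum_eq_single_of_mem i (Finset.mem_univ i)
        intro j _ hj
        rw [hi2 j hj]
        ring
      have hBi : (B i : ℕ) = (A i : ℕ) + 1 := by
        rw [hsum] at hσ
        omega
      have hAi : (A i : ℕ) + 1 < ℓ - n + 1 := by
        have := (B i).isLt
        omega
      refine ⟨(i, A), by simpa [hs] using hAi, ?_⟩
      simp only [Prod.mk.injEq]
      refine ⟨by trivial, ?_⟩
      funext k
      by_cases hk : k = i
      · subst hk
        rw [Function.update_self]
        exact Fin.ext (by simp only [Fin.val_mk]; omega)
      · rw [Function.update_of_ne hk]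
        exact hi2 k hk
    · -- values agree
      rintro ⟨i, A⟩ hq
      have hA : (A i : ℕ) + 1 < ℓ - n + 1 := by simpa [hs] using hq
      simp only [hw]
      rw [dif_pos hA]
  -- the down-oriented pairs give the same sum, via the swap
  have hdown : ∑ p ∈ (Finset.univ.filter
        (fun p : (Fin n → Fin (ℓ - n + 1)) × (Fin n → Fin (ℓ - n + 1)) =>
          (∑ i : Fin n, (((p.1 i : ℕ) : ℤ) - ((p.2 i : ℕ) : ℤ)).natAbs) = 1)).filter
        (fun p => ¬ (∑ i : Fin n, ((p.2 i : ℤ) - (p.1 i : ℤ))) = 1),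
      ‖Φ p.1 - Φ p.2‖ ^ 2 = ∑ q ∈ s, w q := by
    rw [← hup]
    apply Finset.sum_nbij' (i := Prod.swap) (j := Prod.swap)
    · rintro ⟨A, B⟩ hp
      simp only [Finset.mem_filter, Finset.mem_univ, true_and] at hp ⊢
      obtain ⟨hd, hσ⟩ := hp
      obtain ⟨i, hi1, hi2⟩ := hdec A B hd
      have hsum : (∑ k : Fin n, ((B k : ℤ) - (A k : ℤ))) = (B i : ℤ) - (A i : ℤ) := by
        apply Finset.sum_eq_single_of_mem i (Finset.mem_univ i)
        intro j _ hj
        rw [hi2 j hj]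
        ring
      have hsum' : (∑ k : Fin n, ((A k : ℤ) - (B k : ℤ))) = (A i : ℤ) - (B i : ℤ) := by
        apply Finset.sum_eq_single_of_mem i (Finset.mem_univ i)
        intro j _ hj
        rw [hi2 j hj]
        ring
      have hsym : (∑ j : Fin n, (((B j : ℕ) : ℤ) - ((A j : ℕ) : ℤ)).natAbs) =
          ∑ j : Fin n, (((A j : ℕ) : ℤ) - ((B j : ℕ) : ℤ)).natAbs :=
        Finset.sum_congr rfl (fun j _ => by omega)
      simp only [Prod.swap_prod_mk]
      refine ⟨?_, ?_⟩
      · rw [hsym]; exact hd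
      · rw [hsum']
        rw [hsum] at hσ
        omega
    · rintro ⟨A, B⟩ hp
      simp only [Finset.mem_filter, Finset.mem_univ, true_and] at hp ⊢
      obtain ⟨hd, hσ⟩ := hp
      obtain ⟨i, hi1, hi2⟩ := hdec A B hd
      have hsum : (∑ k : Fin n, ((B k : ℤ) - (A k : ℤ))) = (B i : ℤ) - (A i : ℤ) := by
        apply Finset.sum_eq_single_of_mem i (Finset.mem_univ i)
        intro j _ hj
        rw [hi2 j hj]
        ring
      have hsum' : (∑ k : Fin n, ((A k : ℤ) - (B k : ℤ))) = (A i : ℤ) - (B i : ℤ) := by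
        apply Finset.sum_eq_single_of_mem i (Finset.mem_univ i)
        intro j _ hj
        rw [hi2 j hj]
        ring
      have hsym : (∑ j : Fin n, (((B j : ℕ) : ℤ) - ((A j : ℕ) : ℤ)).natAbs) =
          ∑ j : Fin n, (((A j : ℕ) : ℤ) - ((B j : ℕ) : ℤ)).natAbs :=
        Finset.sum_congr rfl (fun j _ => by omega)
      simp only [Prod.swap_prod_mk]
      refine ⟨?_, ?_⟩
      · rw [hsym]; exact hd
      · rw [hsum']
        rw [hsum] at hσ
        omega
    · rintro ⟨A, B⟩ _; rfl
    · rintro ⟨A, B⟩ _; rfl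
    · rintro ⟨A, B⟩ _
      simp only [Prod.swap_prod_mk]
      rw [norm_sub_rev]
  have hparts := Finset.sum_filter_add_sum_filter_not
    (Finset.univ.filter
      (fun p : (Fin n → Fin (ℓ - n + 1)) × (Fin n → Fin (ℓ - n + 1)) =>
        (∑ i : Fin n, (((p.1 i : ℕ) : ℤ) - ((p.2 i : ℕ) : ℤ)).natAbs) = 1))
    (fun p => (∑ i : Fin n, ((p.2 i : ℤ) - (p.1 i : ℤ))) = 1)
    (fun p => ‖Φ p.1 - Φ p.2‖ ^ 2)
  -- the double sum equals twice the sum over up-edges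
  have key : (∑ A : Fin n → Fin (ℓ - n + 1), ∑ B : Fin n → Fin (ℓ - n + 1),
      (if (∑ i : Fin n, (((A i : ℕ) : ℤ) - ((B i : ℕ) : ℤ)).natAbs) = 1
        then ‖Φ A - Φ B‖ ^ 2 else 0)) = 2 * ∑ q ∈ s, w q := by
    rw [hsplit, hfilter, ← hparts, hup, hdown]
    ring
  rw [key]
  -- the energy form dominates the sum over up-edges
  have hterm_nonneg : ∀ p : Fin n × (Fin n → Fin ℓ),
      (0:ℝ) ≤ if h : (p.2 p.1 : ℕ) + 1 < ℓ then
        ‖Ψ (Function.update p.2 p.1 ⟨(p.2 p.1 : ℕ) + 1, h⟩) *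
            (hopCoeff twoS p.2 p.1 (p.2 p.1 : ℕ) : ℂ)
          - Ψ p.2 * (hopCoeff twoS p.2 p.1 ((p.2 p.1 : ℕ) + 1) : ℂ)‖ ^ 2 else 0 := by
    intro p
    split
    · exact sq_nonneg _
    · exact le_rfl
  have hW : ∑ q ∈ s, w q ≤ ∑ j : Fin n, ∑ X : Fin n → Fin ℓ,
      if h : (X j : ℕ) + 1 < ℓ then
        ‖Ψ (Function.update X j ⟨(X j : ℕ) + 1, h⟩) * (hopCoeff twoS X j (X j : ℕ) : ℂ)
          - Ψ X * (hopCoeff twoS X j ((X j : ℕ) + 1) : ℂ)‖ ^ 2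
      else 0 := by
    have hsplit2 : (∑ j : Fin n, ∑ X : Fin n → Fin ℓ,
        if h : (X j : ℕ) + 1 < ℓ then
          ‖Ψ (Function.update X j ⟨(X j : ℕ) + 1, h⟩) * (hopCoeff twoS X j (X j : ℕ) : ℂ)
            - Ψ X * (hopCoeff twoS X j ((X j : ℕ) + 1) : ℂ)‖ ^ 2
        else 0) = ∑ p : Fin n × (Fin n → Fin ℓ),
        (if h : (p.2 p.1 : ℕ) + 1 < ℓ then
          ‖Ψ (Function.update p.2 p.1 ⟨(p.2 p.1 : ℕ) + 1, h⟩) *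
              (hopCoeff twoS p.2 p.1 (p.2 p.1 : ℕ) : ℂ)
            - Ψ p.2 * (hopCoeff twoS p.2 p.1 ((p.2 p.1 : ℕ) + 1) : ℂ)‖ ^ 2 else 0) :=
      (Fintype.sum_prod_type (f := fun p : Fin n × (Fin n → Fin ℓ) =>
        (if h : (p.2 p.1 : ℕ) + 1 < ℓ then
          ‖Ψ (Function.update p.2 p.1 ⟨(p.2 p.1 : ℕ) + 1, h⟩) *
              (hopCoeff twoS p.2 p.1 (p.2 p.1 : ℕ) : ℂ)
            - Ψ p.2 * (hopCoeff twoS p.2 p.1 ((p.2 p.1 : ℕ) + 1) : ℂ)‖ ^ 2 else 0))).symm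
    rw [hsplit2]
    set e : Fin n × (Fin n → Fin (ℓ - n + 1)) → Fin n × (Fin n → Fin ℓ) :=
      fun q => (q.1, EFL.conf hn hnℓ q.2 q.1) with he
    have hinj : ∀ q ∈ s, ∀ q' ∈ s, e q = e q' → q = q' := by
      rintro ⟨i, A⟩ _ ⟨i', A'⟩ _ hee
      have h1 : i = i' := congrArg Prod.fst hee
      subst h1
      have h2 : EFL.conf hn hnℓ A i = EFL.conf hn hnℓ A' i := congrArg Prod.snd hee
      have h3 : A = A' := by
        funext k
        have h4 := EFL.conf_V hn hnℓ A i k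
        have h5 := EFL.conf_V hn hnℓ A' i k
        rw [← h2] at h5
        exact Fin.ext (by rw [h4, h5])
      rw [h3]
    have hstep : ∑ q ∈ s, w q = ∑ p ∈ s.image e,
        (if h : (p.2 p.1 : ℕ) + 1 < ℓ then
          ‖Ψ (Function.update p.2 p.1 ⟨(p.2 p.1 : ℕ) + 1, h⟩) *
              (hopCoeff twoS p.2 p.1 (p.2 p.1 : ℕ) : ℂ)
            - Ψ p.2 * (hopCoeff twoS p.2 p.1 ((p.2 p.1 : ℕ) + 1) : ℂ)‖ ^ 2 else 0) := by
      rw [Finset.sum_image hinj]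
      apply Finset.sum_congr rfl
      rintro ⟨i, A⟩ hq
      have hA : (A i : ℕ) + 1 < ℓ - n + 1 := by simpa [hs] using hq
      have hcond : ((EFL.conf hn hnℓ A i i : ℕ)) + 1 < ℓ := EFL.succ_lt hn hnℓ A i hA
      simp only [hw, he]
      rw [dif_pos hA, dif_pos hcond]
      have hXup : Function.update (EFL.conf hn hnℓ A i) i
          ⟨(EFL.conf hn hnℓ A i i : ℕ) + 1, hcond⟩ = EFL.conf' hn hnℓ A i hA := rfl
      rw [hXup]
      rw [EFL.hop_one_self twoS hn hnℓ A i, EFL.hop_one_succ twoS hn hnℓ A i]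
      rw [hΦ (EFL.conf hn hnℓ A i) (EFL.conf_inj hn hnℓ A i) A (EFL.conf_V hn hnℓ A i)]
      rw [hΦ (EFL.conf' hn hnℓ A i hA) (EFL.conf'_inj hn hnℓ A i hA)
        (Function.update A i ⟨(A i : ℕ) + 1, hA⟩) (EFL.conf'_V hn hnℓ A i hA)]
      simp only [Complex.ofReal_one, mul_one]
      rw [norm_sub_rev]
    rw [hstep]
    apply Finset.sum_le_sum_of_subset_of_nonneg (Finset.subset_univ _)
    intro p _ _
    exact hterm_nonneg p
  have hS0 : (0:ℝ) ≤ Sval twoS := by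
    unfold Sval
    positivity
  unfold Eform
  calc Sval twoS / 2 * (2 * ∑ q ∈ s, w q) = Sval twoS * ∑ q ∈ s, w q := by ring
  _ ≤ Sval twoS * ∑ j : Fin n, ∑ X : Fin n → Fin ℓ,
      (if h : (X j : ℕ) + 1 < ℓ then
        ‖Ψ (Function.update X j ⟨(X j : ℕ) + 1, h⟩) * (hopCoeff twoS X j (X j : ℕ) : ℂ)
          - Ψ X * (hopCoeff twoS X j ((X j : ℕ) + 1) : ℂ)‖ ^ 2 else 0) :=
    mul_le_mul_of_nonneg_left hW hS0

end
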